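/- Let σ be the substitution B → BG, G → GR, R → RBB, and let gᵢ, rᵢ denote the number of G's and R's, respectively, in σⁱ(B). Then gᵢ/rᵢ → 2^{1/3} as i → ∞. -/

import Mathlib

open Filter

/-- The substitution B → BG, G → GR, R → RBB on Fin 3 (B = 0, G = 1, R = 2). -/
def sigmaSub : Fin 3 → List (Fin 3) := ![[0, 1], [1, 2], [2, 0, 0]]

/-- The i-th iterate of the substitution applied to the single-letter word B. -/
def sigmaIter (i : ℕ) : List (Fin 3) :=
  (fun w : List (Fin 3) => w.flatMap sigmaSub)^[i] [0]

namespace CbrtAux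

def bc (i : ℕ) : ℕ := (sigmaIter i).count 0
def gc (i : ℕ) : ℕ := (sigmaIter i).count 1
def rc (i : ℕ) : ℕ := (sigmaIter i).count 2

lemma countB (w : List (Fin 3)) :
    (w.flatMap sigmaSub).count 0 = w.count 0 + 2 * w.count 2 := by
  induction w with
  | nil => simp
  | cons a w ih =>
    rw [List.flatMap_cons, List.count_append, ih]
    fin_cases a <;> simp [sigmaSub, List.count_cons] <;> omega

lemma countG (w : List (Fin 3)) :
    (w.flatMap sigmaSub).count 1 = w.count 0 + w.count 1 := by
  induction w with
  | nil => simp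
  | cons a w ih =>
    rw [List.flatMap_cons, List.count_append, ih]
    fin_cases a <;> simp [sigmaSub, List.count_cons] <;> omega

lemma countR (w : List (Fin 3)) :
    (w.flatMap sigmaSub).count 2 = w.count 1 + w.count 2 := by
  induction w with
  | nil => simp
  | cons a w ih =>
    rw [List.flatMap_cons, List.count_append, ih]
    fin_cases a <;> simp [sigmaSub, List.count_cons] <;> omega

lemma iter_succ (i : ℕ) : sigmaIter (i+1) = (sigmaIter i).flatMap sigmaSub := by
  simp [sigmaIter, Function.iterate_succ_apply']

lemma bc_succ (i : ℕ) : bc (i+1) = bc i + 2 * rc i := by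
  simp [bc, rc, iter_succ, countB]
lemma gc_succ (i : ℕ) : gc (i+1) = bc i + gc i := by
  simp [gc, bc, iter_succ, countG]
lemma rc_succ (i : ℕ) : rc (i+1) = gc i + rc i := by
  simp [rc, gc, iter_succ, countR]

lemma key (z : ℂ) (hz : z^3 = 2) :
    ∀ i, (bc i : ℂ) + (gc i : ℂ) * z + (rc i : ℂ) * z^2 = (1+z)^i := by
  intro i
  induction i with
  | zero => simp [bc, gc, rc, sigmaIter]
  | succ i ih =>
    rw [bc_succ, gc_succ, rc_succ]
    push_cast
    rw [pow_succ]
    linear_combination (1+z) * ih - (rc i : ℂ) * hz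

end CbrtAux

namespace CbrtAux2

noncomputable def al : ℝ := (2:ℝ) ^ ((1:ℝ)/3)
noncomputable def ω : ℂ := ⟨-1/2, Real.sqrt 3 / 2⟩

lemma s3 : Real.sqrt 3 * Real.sqrt 3 = 3 := Real.mul_self_sqrt (by norm_num)

lemma hω : ω^2 + ω + 1 = 0 := by
  have := s3
  simp only [Complex.ext_iff, ω, pow_two, Complex.add_re, Complex.add_im,
    Complex.mul_re, Complex.mul_im, Complex.one_re, Complex.one_im,
    Complex.zero_re, Complex.zero_im]
  constructor <;> nlinarith [s3]

lemma al_pos : 0 < al := Real.rpow_pos_of_pos (by norm_num) _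
lemma al_cube : al^3 = 2 := by
  rw [al, ← Real.rpow_natCast ((2:ℝ)^((1:ℝ)/3)) 3, ← Real.rpow_mul (by norm_num)]
  norm_num

noncomputable def A : ℂ := (al : ℝ)
lemma hA : A^3 = 2 := by
  rw [A, ← Complex.ofReal_pow, al_cube]; norm_num

lemma hz1 : (ω*A)^3 = 2 := by
  linear_combination (2:ℂ) * (ω - 1) * hω + ω^3 * hA
lemma hz2 : (ω^2*A)^3 = 2 := by
  linear_combination (2:ℂ) * (ω - 1) * (ω^3 + 1) * hω + ω^6 * hA

-- norm computations
lemma norm_lt : ‖1 + ω*A‖ < 1 + al := by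
  have h1 : ‖1 + ω*A‖ ^ 2 = 1 - al + al^2 := by
    rw [Complex.sq_norm, Complex.normSq_apply]
    simp [ω, A, Complex.mul_re, Complex.mul_im]
    nlinarith [s3]
  nlinarith [norm_nonneg (1 + ω*A), al_pos]

lemma norm_lt2 : ‖1 + ω^2*A‖ < 1 + al := by
  have hc : (1 : ℂ) + ω^2*A = (starRingEnd ℂ) (1 + ω*A) := by
    rw [map_add, map_mul, map_one]
    have h1 : (starRingEnd ℂ) ω = ω^2 := by
      simp [Complex.ext_iff, ω, pow_two, Complex.mul_re, Complex.mul_im]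
      constructor <;> nlinarith [s3]
    have h2 : (starRingEnd ℂ) A = A := by simp [A]
    rw [h1, h2]
  rw [hc, Complex.norm_conj]
  exact norm_lt

end CbrtAux2

namespace CbrtAux3
open CbrtAux CbrtAux2

lemma hG (i : ℕ) :
    (1+A)^i + ω^2*(1+ω*A)^i + ω*(1+ω^2*A)^i = 3*A*(gc i : ℂ) := by
  have e0 := key A hA i
  have e1 := key (ω*A) hz1 i
  have e2 := key (ω^2*A) hz2 i
  linear_combination (-1 : ℂ) * e0 - ω^2 * e1 - ω * e2 +
    ((bc i : ℂ) + (rc i) * A^2 + 2*(gc i)*A*(ω-1) + (rc i)*A^2*(ω+ω^2)*(ω-1)) * hω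

lemma hR (i : ℕ) :
    (1+A)^i + ω*(1+ω*A)^i + ω^2*(1+ω^2*A)^i = 3*A^2*(rc i : ℂ) := by
  have e0 := key A hA i
  have e1 := key (ω*A) hz1 i
  have e2 := key (ω^2*A) hz2 i
  linear_combination (-1 : ℂ) * e0 - ω * e1 - ω^2 * e2 +
    ((bc i : ℂ) + (gc i) * A + 2*(rc i)*A^2*(ω-1) + ((gc i)*A*ω + (rc i)*A^2*ω^3)*(ω-1)) * hω

end CbrtAux3

namespace CbrtAux4
open CbrtAux CbrtAux2 CbrtAux3

noncomputable def L : ℂ := 1 + A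
noncomputable def u : ℂ := (1 + ω*A)/L
noncomputable def v : ℂ := (1 + ω^2*A)/L

lemma hL : L = ((1 + al : ℝ) : ℂ) := by simp [L, A]
lemma hLne : L ≠ 0 := by
  rw [hL]
  simp only [ne_eq, Complex.ofReal_eq_zero]
  nlinarith [al_pos]
lemma hAne : A ≠ 0 := by
  simp only [A, ne_eq, Complex.ofReal_eq_zero]
  exact ne_of_gt al_pos

lemma hu : ‖u‖ < 1 := by
  rw [u, norm_div, hL, Complex.norm_real]
  rw [div_lt_one (by rw [Real.norm_eq_abs, abs_of_pos (by nlinarith [al_pos])]; nlinarith [al_pos])]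
  rw [Real.norm_eq_abs, abs_of_pos (by nlinarith [al_pos])]
  exact norm_lt

lemma hv : ‖v‖ < 1 := by
  rw [v, norm_div, hL, Complex.norm_real]
  rw [div_lt_one (by rw [Real.norm_eq_abs, abs_of_pos (by nlinarith [al_pos])]; nlinarith [al_pos])]
  rw [Real.norm_eq_abs, abs_of_pos (by nlinarith [al_pos])]
  exact norm_lt2

lemma gform (i : ℕ) : (((gc i : ℝ)/(1 + al)^i : ℝ) : ℂ) =
    1/(3*A) + ω^2/(3*A)*u^i + ω/(3*A)*v^i := by
  have h3A : (3:ℂ)*A ≠ 0 := by simp [hAne]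
  have e : (gc i : ℂ) = ((1+A)^i + ω^2*(1+ω*A)^i + ω*(1+ω^2*A)^i)/(3*A) := by
    rw [eq_div_iff h3A]; linear_combination (hG i).symm
  have hcast : (((gc i : ℝ)/(1 + al)^i : ℝ) : ℂ) = (gc i : ℂ)/L^i := by
    push_cast [hL]; ring
  have h1A : (1:ℂ)+A ≠ 0 := hLne
  rw [hcast, e, u, v, L, div_pow, div_pow]
  have hLi : ((1:ℂ)+A)^i ≠ 0 := pow_ne_zero _ h1A
  set P := ((1:ℂ)+A)^i
  set Q := ((1:ℂ)+ω*A)^i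
  set R := ((1:ℂ)+ω^2*A)^i
  field_simp

lemma rform (i : ℕ) : (((rc i : ℝ)/(1 + al)^i : ℝ) : ℂ) =
    1/(3*A^2) + ω/(3*A^2)*u^i + ω^2/(3*A^2)*v^i := by
  have h3A : (3:ℂ)*A^2 ≠ 0 := by simp [hAne]
  have e : (rc i : ℂ) = ((1+A)^i + ω*(1+ω*A)^i + ω^2*(1+ω^2*A)^i)/(3*A^2) := by
    rw [eq_div_iff h3A]; linear_combination (hR i).symm
  have hcast : (((rc i : ℝ)/(1 + al)^i : ℝ) : ℂ) = (rc i : ℂ)/L^i := by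
    push_cast [hL]; ring
  have h1A : (1:ℂ)+A ≠ 0 := hLne
  rw [hcast, e, u, v, L, div_pow, div_pow]
  have hLi : ((1:ℂ)+A)^i ≠ 0 := pow_ne_zero _ h1A
  set P := ((1:ℂ)+A)^i
  set Q := ((1:ℂ)+ω*A)^i
  set R := ((1:ℂ)+ω^2*A)^i
  field_simp

lemma gtend : Tendsto (fun i => (gc i : ℝ)/(1 + al)^i) atTop (nhds (1/(3*al))) := by
  have h : Tendsto (fun i => (((gc i : ℝ)/(1 + al)^i : ℝ) : ℂ)) atTop
      (nhds (1/(3*A))) := by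
    have hu0 := tendsto_pow_atTop_nhds_zero_of_norm_lt_one hu
    have hv0 := tendsto_pow_atTop_nhds_zero_of_norm_lt_one hv
    have := (tendsto_const_nhds (x := 1/(3*A)) (f := atTop)).add
      (((tendsto_const_nhds (x := ω^2/(3*A)) (f := atTop)).mul hu0).add
       ((tendsto_const_nhds (x := ω/(3*A)) (f := atTop)).mul hv0))
    simp only [mul_zero, add_zero] at this
    refine this.congr fun i => ?_
    rw [gform]; ring
  rw [← Filter.tendsto_ofReal_iff]
  convert h using 2
  rw [A]
  push_cast
  ring

lemma rtend : Tendsto (fun i => (rc i : ℝ)/(1 + al)^i) atTop (nhds (1/(3*al^2))) := by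
  have h : Tendsto (fun i => (((rc i : ℝ)/(1 + al)^i : ℝ) : ℂ)) atTop
      (nhds (1/(3*A^2))) := by
    have hu0 := tendsto_pow_atTop_nhds_zero_of_norm_lt_one hu
    have hv0 := tendsto_pow_atTop_nhds_zero_of_norm_lt_one hv
    have := (tendsto_const_nhds (x := 1/(3*A^2)) (f := atTop)).add
      (((tendsto_const_nhds (x := ω/(3*A^2)) (f := atTop)).mul hu0).add
       ((tendsto_const_nhds (x := ω^2/(3*A^2)) (f := atTop)).mul hv0))
    simp only [mul_zero, add_zero] at this
    refine this.congr fun i => ?_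
    rw [rform]; ring
  rw [← Filter.tendsto_ofReal_iff]
  convert h using 2
  rw [A]
  push_cast
  ring

lemma main : Tendsto (fun i => (gc i : ℝ) / (rc i : ℝ)) atTop (nhds al) := by
  have hne : (1:ℝ)/(3*al^2) ≠ 0 := by
    have := al_pos; positivity
  have h := gtend.div rtend hne
  have hval : (1/(3*al))/(1/(3*al^2)) = al := by
    have := al_pos
    field_simp
  rw [hval] at h
  refine h.congr fun i => ?_
  have hl : ((1:ℝ)+al)^i ≠ 0 := pow_ne_zero _ (by nlinarith [al_pos])
  by_cases hr : (rc i:ℝ) = 0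
  · simp [hr]
  · simp only [Pi.div_apply]
    field_simp

end CbrtAux4

theorem count_ratio_tendsto_cbrt_two :
    Tendsto (fun i => ((sigmaIter i).count (1 : Fin 3) : ℝ) /
        ((sigmaIter i).count (2 : Fin 3) : ℝ)) atTop
      (nhds ((2 : ℝ) ^ ((1 : ℝ) / 3))) := by
  exact CbrtAux4.main
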